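/- arXiv:math/0304269 — 2 statements merged into one kernel-verified Lean document; each statement's English description precedes it below -/
import Mathlib

section
/- Let E and F be finite-dimensional complex inner product spaces and let T : E → F be a linear map, with adjoint T* : F → E. Then for every real t > 0, trace(exp(-t · (T* ∘ T))) - trace(exp(-t · (T ∘ T*))) = dim(ker T) - dim(ker T*). In particular, the left-hand side is independent of t and equals the index of T. -/
open scoped ComplexConjugate

open ContinuousLinearMap in
/-- Trace of the exponential as a sum over powers. -/
lemma trace_exp_tsum_aux {E : Type*} [NormedAddCommGroup E] [InnerProductSpace ℂ E]
    [FiniteDimensional ℂ E] (X : E →L[ℂ] E) :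
    LinearMap.trace ℂ E (NormedSpace.exp X).toLinearMap
      = ∑' n : ℕ, ((Nat.factorial n : ℂ))⁻¹ • LinearMap.trace ℂ E ((X : E →ₗ[ℂ] E) ^ n) := by
  haveI : CompleteSpace E := FiniteDimensional.complete ℂ E
  let g : (E →L[ℂ] E) →ₗ[ℂ] ℂ := (LinearMap.trace ℂ E).comp (ContinuousLinearMap.coeLM ℂ)
  let g' : (E →L[ℂ] E) →L[ℂ] ℂ := ⟨g, LinearMap.continuous_of_finiteDimensional g⟩
  have hsum : Summable fun n : ℕ => ((Nat.factorial n : ℂ))⁻¹ • X ^ n :=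
    NormedSpace.expSeries_summable' (𝕂 := ℂ) X
  have h : LinearMap.trace ℂ E (NormedSpace.exp X).toLinearMap
      = g' (∑' n : ℕ, ((Nat.factorial n : ℂ))⁻¹ • X ^ n) := by
    rw [NormedSpace.exp_eq_tsum (𝕂 := ℂ)]
    rfl
  rw [h, g'.map_tsum hsum]
  refine tsum_congr fun n => ?_
  show g (((Nat.factorial n : ℂ))⁻¹ • X ^ n) = _
  rw [map_smul]
  congr 1
  show LinearMap.trace ℂ E ((X ^ n : E →L[ℂ] E) : E →ₗ[ℂ] E) = _
  congr 1
  exact map_pow (ContinuousLinearMap.toLinearMapRingHom (M₁ := E) (R₁ := ℂ)) X n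

/-- traces of (T*T)^(n+1) and (TT*)^(n+1) agree. -/
lemma trace_pow_comm_aux {E F : Type*} [NormedAddCommGroup E] [InnerProductSpace ℂ E]
    [FiniteDimensional ℂ E] [NormedAddCommGroup F] [InnerProductSpace ℂ F]
    [FiniteDimensional ℂ F] (f : E →ₗ[ℂ] F) (g : F →ₗ[ℂ] E) (n : ℕ) :
    LinearMap.trace ℂ E ((g ∘ₗ f) ^ (n + 1)) = LinearMap.trace ℂ F ((f ∘ₗ g) ^ (n + 1)) := by
  induction n with
  | zero =>
      rw [pow_one, pow_one]
      exact LinearMap.trace_comp_comm' f g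
  | succ m ih =>
      have key : ∀ k : ℕ, f ∘ₗ ((g ∘ₗ f) ^ k) = ((f ∘ₗ g) ^ k) ∘ₗ f := by
        intro k
        induction k with
        | zero => simp [Module.End.one_eq_id]
        | succ j hj =>
            rw [pow_succ, pow_succ]
            calc f ∘ₗ ((g ∘ₗ f) ^ j * (g ∘ₗ f))
                = (f ∘ₗ (g ∘ₗ f) ^ j) ∘ₗ (g ∘ₗ f) := by
                  rw [Module.End.mul_eq_comp, LinearMap.comp_assoc]
              _ = (((f ∘ₗ g) ^ j) ∘ₗ f) ∘ₗ (g ∘ₗ f) := by rw [hj]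
              _ = ((f ∘ₗ g) ^ j * (f ∘ₗ g)) ∘ₗ f := by
                  rw [Module.End.mul_eq_comp]
                  simp only [LinearMap.comp_assoc]
      calc LinearMap.trace ℂ E ((g ∘ₗ f) ^ (m + 2))
          = LinearMap.trace ℂ E (((g ∘ₗ f) ^ (m + 1)) ∘ₗ (g ∘ₗ f)) := by
            rw [pow_succ, Module.End.mul_eq_comp]
        _ = LinearMap.trace ℂ E ((((g ∘ₗ f) ^ (m + 1)) ∘ₗ g) ∘ₗ f) := by
            rw [LinearMap.comp_assoc]
        _ = LinearMap.trace ℂ F (f ∘ₗ (((g ∘ₗ f) ^ (m + 1)) ∘ₗ g)) :=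
            LinearMap.trace_comp_comm' f _
        _ = LinearMap.trace ℂ F ((f ∘ₗ g) ^ (m + 2)) := by
            rw [← LinearMap.comp_assoc, key (m + 1)]
            simp only [pow_succ, Module.End.mul_eq_comp, LinearMap.comp_assoc]

/-- kernel of the adjoint is the orthogonal complement of the range. -/
lemma ker_adjoint_aux {E F : Type*} [NormedAddCommGroup E] [InnerProductSpace ℂ E]
    [FiniteDimensional ℂ E] [NormedAddCommGroup F] [InnerProductSpace ℂ F]
    [FiniteDimensional ℂ F] (T : E →L[ℂ] F) :
    LinearMap.ker (ContinuousLinearMap.adjoint T).toLinearMap = (LinearMap.range (T : E →ₗ[ℂ] F))ᗮ := by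
  ext x
  simp only [LinearMap.mem_ker, ContinuousLinearMap.coe_coe, Submodule.mem_orthogonal]
  constructor
  · rintro hx _ ⟨y, rfl⟩
    show (inner ℂ (T y) x : ℂ) = 0
    rw [← ContinuousLinearMap.adjoint_inner_right, hx, inner_zero_right]
  · intro hx
    have h := hx (T ((ContinuousLinearMap.adjoint T) x)) ⟨_, rfl⟩
    have h2 : (inner ℂ ((ContinuousLinearMap.adjoint T) x) ((ContinuousLinearMap.adjoint T) x) : ℂ) = 0 := by
      rw [ContinuousLinearMap.adjoint_inner_right]; exact h
    exact inner_self_eq_zero.mp h2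

/-- Finite-dimensional McKean–Singer formula: for a linear map `T` between
finite-dimensional complex inner product spaces with adjoint `T*`, and any `t > 0`,
`Tr(exp(-t T* T)) - Tr(exp(-t T T*)) = dim ker T - dim ker T*`. -/
theorem mckean_singer_finite_dim
    {E F : Type*} [NormedAddCommGroup E] [InnerProductSpace ℂ E] [FiniteDimensional ℂ E]
    [NormedAddCommGroup F] [InnerProductSpace ℂ F] [FiniteDimensional ℂ F]
    (T : E →L[ℂ] F) (t : ℝ) (ht : 0 < t) :
    LinearMap.trace ℂ E
        (NormedSpace.exp ((-t) • (ContinuousLinearMap.adjoint T ∘L T)) : E →L[ℂ] E).toLinearMap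
      - LinearMap.trace ℂ F
        (NormedSpace.exp ((-t) • (T ∘L ContinuousLinearMap.adjoint T)) : F →L[ℂ] F).toLinearMap
      = (Module.finrank ℂ (LinearMap.ker T.toLinearMap) : ℂ)
        - (Module.finrank ℂ (LinearMap.ker (ContinuousLinearMap.adjoint T).toLinearMap) : ℂ) := by
  haveI : CompleteSpace E := FiniteDimensional.complete ℂ E
  haveI : CompleteSpace F := FiniteDimensional.complete ℂ F
  set T' := ContinuousLinearMap.adjoint T with hT'
  -- LHS = dim E - dim F
  set A : E →L[ℂ] E := (-t) • (T' ∘L T) with hA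
  set B : F →L[ℂ] F := (-t) • (T ∘L T') with hB
  have hAn : ∀ n : ℕ, ((A : E →ₗ[ℂ] E)) ^ n
      = ((-t : ℝ) ^ n) • (((T' : F →ₗ[ℂ] E) ∘ₗ (T : E →ₗ[ℂ] F)) ^ n) := by
    intro n
    have : (A : E →ₗ[ℂ] E) = (-t : ℝ) • ((T' : F →ₗ[ℂ] E) ∘ₗ (T : E →ₗ[ℂ] F)) := rfl
    rw [this, smul_pow]
  have hBn : ∀ n : ℕ, ((B : F →ₗ[ℂ] F)) ^ n
      = ((-t : ℝ) ^ n) • (((T : E →ₗ[ℂ] F) ∘ₗ (T' : F →ₗ[ℂ] E)) ^ n) := by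
    intro n
    have : (B : F →ₗ[ℂ] F) = (-t : ℝ) • ((T : E →ₗ[ℂ] F) ∘ₗ (T' : F →ₗ[ℂ] E)) := rfl
    rw [this, smul_pow]
  have htermeq : ∀ n : ℕ, n ≠ 0 →
      ((Nat.factorial n : ℂ))⁻¹ • LinearMap.trace ℂ E ((A : E →ₗ[ℂ] E) ^ n)
        = ((Nat.factorial n : ℂ))⁻¹ • LinearMap.trace ℂ F ((B : F →ₗ[ℂ] F) ^ n) := by
    intro n hn
    obtain ⟨m, rfl⟩ := Nat.exists_eq_succ_of_ne_zero hn
    rw [hAn, hBn, LinearMap.map_smul_of_tower _ ((-t)^(m+1)), LinearMap.map_smul_of_tower _ ((-t)^(m+1)),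
      trace_pow_comm_aux (T : E →ₗ[ℂ] F) (T' : F →ₗ[ℂ] E) m]
  -- summability of both trace series
  let gE : (E →L[ℂ] E) →ₗ[ℂ] ℂ := (LinearMap.trace ℂ E).comp (ContinuousLinearMap.coeLM ℂ)
  let gE' : (E →L[ℂ] E) →L[ℂ] ℂ := ⟨gE, LinearMap.continuous_of_finiteDimensional gE⟩
  let gF : (F →L[ℂ] F) →ₗ[ℂ] ℂ := (LinearMap.trace ℂ F).comp (ContinuousLinearMap.coeLM ℂ)
  let gF' : (F →L[ℂ] F) →L[ℂ] ℂ := ⟨gF, LinearMap.continuous_of_finiteDimensional gF⟩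
  have hsumA : Summable fun n : ℕ => ((Nat.factorial n : ℂ))⁻¹ • LinearMap.trace ℂ E ((A : E →ₗ[ℂ] E) ^ n) := by
    have h := (NormedSpace.expSeries_summable' (𝕂 := ℂ) A).map gE'.toLinearMap.toAddMonoidHom
      gE'.continuous
    convert h using 2 with n
    show _ = gE (((Nat.factorial n : ℂ))⁻¹ • A ^ n)
    rw [map_smul]
    congr 1
    exact congrArg (LinearMap.trace ℂ E)
      (map_pow (ContinuousLinearMap.toLinearMapRingHom (M₁ := E) (R₁ := ℂ)) A n).symm
  have hsumB : Summable fun n : ℕ => ((Nat.factorial n : ℂ))⁻¹ • LinearMap.trace ℂ F ((B : F →ₗ[ℂ] F) ^ n) := by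
    have h := (NormedSpace.expSeries_summable' (𝕂 := ℂ) B).map gF'.toLinearMap.toAddMonoidHom
      gF'.continuous
    convert h using 2 with n
    show _ = gF (((Nat.factorial n : ℂ))⁻¹ • B ^ n)
    rw [map_smul]
    congr 1
    exact congrArg (LinearMap.trace ℂ F)
      (map_pow (ContinuousLinearMap.toLinearMapRingHom (M₁ := F) (R₁ := ℂ)) B n).symm
  have hLHS : LinearMap.trace ℂ E (NormedSpace.exp A).toLinearMap
      - LinearMap.trace ℂ F (NormedSpace.exp B).toLinearMap
      = (Module.finrank ℂ E : ℂ) - (Module.finrank ℂ F : ℂ) := by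
    rw [trace_exp_tsum_aux A, trace_exp_tsum_aux B, ← Summable.tsum_sub hsumA hsumB]
    rw [tsum_eq_single 0 (fun n hn => by rw [htermeq n hn, sub_self])]
    simp [LinearMap.trace_one]
  rw [hLHS]
  -- RHS: rank-nullity and ker T* = (range T)ᗮ
  have h1 : Module.finrank ℂ (LinearMap.range (T : E →ₗ[ℂ] F))
      + Module.finrank ℂ (LinearMap.ker (T : E →ₗ[ℂ] F)) = Module.finrank ℂ E :=
    LinearMap.finrank_range_add_finrank_ker (T : E →ₗ[ℂ] F)
  have h2 : Module.finrank ℂ (LinearMap.range (T : E →ₗ[ℂ] F))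
      + Module.finrank ℂ (LinearMap.ker (T' : F →ₗ[ℂ] E)) = Module.finrank ℂ F := by
    rw [ker_adjoint_aux T]
    exact Submodule.finrank_add_finrank_orthogonal _
  have hkT : LinearMap.ker T.toLinearMap = LinearMap.ker (T : E →ₗ[ℂ] F) := rfl
  rw [hkT]
  push_cast [← h1, ← h2]
  ring
end

section
/- Let E and F be finite-dimensional complex inner product spaces and let T : E → F be a linear map with adjoint T* : F → E. On the direct sum V = E ⊕ F define the odd operator D by D(e, f) = (T* f, T e) and the grading operator ε by ε(e, f) = (e, -f). Then for every real t > 0, the supertrace trace(ε ∘ exp(-t · D²)) equals dim(ker T) - dim(ker T*). -/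
/-- Helper instance (derivable from Mathlib, stated to guide instance search). -/
noncomputable local instance prodCLMTopologicalRing
    {E F : Type*} [NormedAddCommGroup E] [NormedSpace ℂ E]
    [NormedAddCommGroup F] [NormedSpace ℂ F] :
    IsTopologicalRing ((E × F) →L[ℂ] (E × F)) := inferInstance

/-- The supertrace of any positive power of an odd operator vanishes. -/
lemma supertrace_pow_zero {V : Type*} [AddCommGroup V] [Module ℂ V] [Module.Finite ℂ V]
    (g d : Module.End ℂ V) (hanti : g * d = -(d * g)) (m : ℕ) :
    LinearMap.trace ℂ V (g * d ^ (m + 1)) = 0 := by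
  have hdg : d * g = -(g * d) := by rw [hanti, neg_neg]
  have t1 : LinearMap.trace ℂ V (g * d ^ (m + 1))
      = LinearMap.trace ℂ V (d ^ (m + 1) * g) := LinearMap.trace_mul_comm ℂ g (d ^ (m + 1))
  have t2 : LinearMap.trace ℂ V ((d ^ m * g) * d)
      = LinearMap.trace ℂ V (d * (d ^ m * g)) := LinearMap.trace_mul_comm ℂ (d ^ m * g) d
  have h2 : d ^ (m + 1) * g = -((d ^ m * g) * d) := by
    rw [pow_succ, mul_assoc, hdg, mul_neg, ← mul_assoc]
  have h3 : d * (d ^ m * g) = d ^ (m + 1) * g := by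
    rw [← mul_assoc, ← pow_succ']
  have key : LinearMap.trace ℂ V (g * d ^ (m + 1))
      = -LinearMap.trace ℂ V (g * d ^ (m + 1)) := calc
    LinearMap.trace ℂ V (g * d ^ (m + 1))
        = LinearMap.trace ℂ V (d ^ (m + 1) * g) := t1
    _ = -LinearMap.trace ℂ V ((d ^ m * g) * d) := by rw [h2, map_neg]
    _ = -LinearMap.trace ℂ V (d * (d ^ m * g)) := by rw [t2]
    _ = -LinearMap.trace ℂ V (d ^ (m + 1) * g) := by rw [h3]
    _ = -LinearMap.trace ℂ V (g * d ^ (m + 1)) := by rw [← t1]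
  have h4 := add_eq_zero_iff_eq_neg.mpr key
  rw [← two_smul ℂ] at h4
  simpa using (smul_eq_zero.mp h4).resolve_left (by norm_num)

set_option maxHeartbeats 1000000 in
set_option synthInstance.maxHeartbeats 400000 in
/-- Finite-dimensional McKean–Singer supertrace formula: with
`D(e,f) = (T* f, T e)` odd and grading `ε(e,f) = (e, -f)` on `E ⊕ F`,
one has `Tr_s(exp(-t D²)) = Tr(ε ∘ exp(-t D²)) = dim ker T - dim ker T*`
for every `t > 0`. -/
theorem mckean_singer_supertrace_finite_dim
    {E F : Type*} [NormedAddCommGroup E] [InnerProductSpace ℂ E] [FiniteDimensional ℂ E]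
    [NormedAddCommGroup F] [InnerProductSpace ℂ F] [FiniteDimensional ℂ F]
    (T : E →L[ℂ] F) (D ε : (E × F) →L[ℂ] (E × F))
    (hD : ∀ (e : E) (f : F), D (e, f) = (ContinuousLinearMap.adjoint T f, T e))
    (hε : ∀ (e : E) (f : F), ε (e, f) = (e, -f))
    (t : ℝ) (ht : 0 < t) :
    LinearMap.trace ℂ (E × F)
        ((ε ∘L NormedSpace.exp ((-t) • (D ∘L D))) : (E × F) →L[ℂ] (E × F)).toLinearMap
      = (Module.finrank ℂ (LinearMap.ker (T : E →ₗ[ℂ] F)) : ℂ)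
        - (Module.finrank ℂ (LinearMap.ker (ContinuousLinearMap.adjoint T : F →ₗ[ℂ] E)) : ℂ) := by
  classical
  haveI : CompleteSpace (E × F) := FiniteDimensional.complete ℂ _
  haveI : T2Space ((E × F) →L[ℂ] (E × F)) := ContinuousLinearMap.instT2Space
  -- anticommutation of ε and D
  have hanti0 : ∀ x : E × F, ε (D x) = -(D (ε x)) := by
    rintro ⟨e, f⟩
    rw [hD, hε, hε, hD]
    simp [Prod.ext_iff]
  set g : Module.End ℂ (E × F) := ε.toLinearMap with hg
  set d : Module.End ℂ (E × F) := D.toLinearMap with hd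
  have hanti : g * d = -(d * g) := LinearMap.ext fun x => hanti0 x
  -- the supertrace functional
  let φ₀ : ((E × F) →L[ℂ] (E × F)) →ₗ[ℂ] ℂ :=
    { toFun := fun B => LinearMap.trace ℂ (E × F) ((ε ∘L B).toLinearMap)
      map_add' := fun B C => by
        simp [ContinuousLinearMap.comp_add]
      map_smul' := fun c B => by
        simp [ContinuousLinearMap.comp_smul] }
  let φ : ((E × F) →L[ℂ] (E × F)) →L[ℂ] ℂ := ⟨φ₀, φ₀.continuous_of_finiteDimensional⟩
  have hφ : ∀ B : (E × F) →L[ℂ] (E × F),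
      φ B = LinearMap.trace ℂ (E × F) ((ε ∘L B).toLinearMap) := fun _ => rfl
  -- the exponential as a sum
  set A : (E × F) →L[ℂ] (E × F) := (-t) • (D ∘L D) with hA
  have hsum : Summable fun n : ℕ => ((n.factorial : ℂ))⁻¹ • A ^ n :=
    NormedSpace.expSeries_summable' (𝕂 := ℂ) A
  have hexp : φ (NormedSpace.exp A) = ∑' n : ℕ, φ (((n.factorial : ℂ))⁻¹ • A ^ n) := by
    rw [NormedSpace.exp_eq_tsum (𝕂 := ℂ)]
    exact φ.map_tsum hsum
  -- each positive term vanishes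
  have hAc : A = ((-t : ℝ) : ℂ) • (D ∘L D) := by
    rw [hA, ← algebraMap_smul ℂ (-t) (D ∘L D)]
    rfl
  have hterm : ∀ n : ℕ, n ≠ 0 → φ (((n.factorial : ℂ))⁻¹ • A ^ n) = 0 := by
    intro n hn
    obtain ⟨m, rfl⟩ := Nat.exists_eq_succ_of_ne_zero hn
    rw [map_smul, smul_eq_zero]
    right
    rw [hAc, smul_pow, map_smul, smul_eq_zero]
    right
    rw [hφ]
    have hpowc : (((D ∘L D) ^ (m + 1)).toLinearMap)
        = ((D ∘L D).toLinearMap) ^ (m + 1) :=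
      map_pow (ContinuousLinearMap.toLinearMapRingHom (R₁ := ℂ) (M₁ := E × F))
        (D ∘L D) (m + 1)
    have hcoe : ((ε ∘L (D ∘L D) ^ (m + 1)).toLinearMap)
        = g * (d * d) ^ (m + 1) := by
      rw [hg, hd, ContinuousLinearMap.toLinearMap_comp, hpowc, ContinuousLinearMap.toLinearMap_comp]
      rfl
    rw [hcoe]
    have hpow : (d * d) ^ (m + 1) = d ^ (2 * m + 1 + 1) := by
      rw [← pow_two, ← pow_mul]
      ring_nf
    rw [hpow]
    exact supertrace_pow_zero g d hanti (2 * m + 1)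
  -- so only the n = 0 term survives
  have htsum : ∑' n : ℕ, φ (((n.factorial : ℂ))⁻¹ • A ^ n) = φ 1 := by
    rw [tsum_eq_single 0 (fun n hn => hterm n hn)]
    simp
  -- the supertrace of the identity
  have hgε : g = LinearMap.prodMap (LinearMap.id : E →ₗ[ℂ] E)
      (-(LinearMap.id : F →ₗ[ℂ] F)) :=
    LinearMap.ext fun x => by rw [hg]; simpa using hε x.1 x.2
  have hφ1 : φ 1 = (Module.finrank ℂ E : ℂ) - (Module.finrank ℂ F : ℂ) := by
    rw [hφ]
    have h1 : ((ε ∘L (1 : (E × F) →L[ℂ] (E × F))).toLinearMap) = g := by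
      rw [hg]; ext x <;> simp
    rw [h1, hgε, LinearMap.trace_prodMap', LinearMap.trace_id, map_neg,
      LinearMap.trace_id, sub_eq_add_neg]
  -- dimension count: ker T* = (range T)ᗮ
  have hker : LinearMap.ker (ContinuousLinearMap.adjoint T : F →ₗ[ℂ] E) = (LinearMap.range (T : E →ₗ[ℂ] F))ᗮ := by
    ext f
    simp only [LinearMap.mem_ker, Submodule.mem_orthogonal, ContinuousLinearMap.coe_coe]
    constructor
    · rintro h u ⟨e, rfl⟩
      rw [ContinuousLinearMap.coe_coe, ← ContinuousLinearMap.adjoint_inner_right, h, inner_zero_right]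
    · intro h
      rw [← inner_self_eq_zero (𝕜 := ℂ) (x := ContinuousLinearMap.adjoint T f),
        ContinuousLinearMap.adjoint_inner_left, ← inner_conj_symm]
      rw [h (T (ContinuousLinearMap.adjoint T f)) ⟨_, rfl⟩]
      simp
  have h1 : Module.finrank ℂ (LinearMap.range (T : E →ₗ[ℂ] F)) + Module.finrank ℂ (LinearMap.ker (T : E →ₗ[ℂ] F))
      = Module.finrank ℂ E := LinearMap.finrank_range_add_finrank_ker (T : E →ₗ[ℂ] F)
  have h3 : Module.finrank ℂ (LinearMap.range (T : E →ₗ[ℂ] F)) + Module.finrank ℂ (LinearMap.range (T : E →ₗ[ℂ] F))ᗮ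
      = Module.finrank ℂ F := Submodule.finrank_add_finrank_orthogonal _
  have hrank : (Module.finrank ℂ (LinearMap.ker (T : E →ₗ[ℂ] F)) : ℂ)
      - (Module.finrank ℂ (LinearMap.ker (ContinuousLinearMap.adjoint T : F →ₗ[ℂ] E)) : ℂ)
      = (Module.finrank ℂ E : ℂ) - (Module.finrank ℂ F : ℂ) := by
    rw [hker]
    have c1 : ((Module.finrank ℂ (LinearMap.range (T : E →ₗ[ℂ] F)) : ℂ))
        + (Module.finrank ℂ (LinearMap.ker (T : E →ₗ[ℂ] F)) : ℂ) = (Module.finrank ℂ E : ℂ) := by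
      exact_mod_cast congrArg (Nat.cast : ℕ → ℂ) h1
    have c3 : ((Module.finrank ℂ (LinearMap.range (T : E →ₗ[ℂ] F)) : ℂ))
        + (Module.finrank ℂ ((LinearMap.range (T : E →ₗ[ℂ] F))ᗮ : Submodule ℂ F) : ℂ)
        = (Module.finrank ℂ F : ℂ) := by
      exact_mod_cast congrArg (Nat.cast : ℕ → ℂ) h3
    linear_combination c1 - c3
  calc LinearMap.trace ℂ (E × F)
        ((ε ∘L NormedSpace.exp ((-t) • (D ∘L D))).toLinearMap)
      = φ (NormedSpace.exp A) := (hφ _).symm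
    _ = φ 1 := by rw [hexp, htsum]
    _ = (Module.finrank ℂ E : ℂ) - (Module.finrank ℂ F : ℂ) := hφ1
    _ = _ := hrank.symm
end
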